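/- Let H be an intersecting r-partite hypergraph with τ(H) = r in which every vertex has positive degree. Then the maximum degree Δ(H) is at least 4. -/

import Mathlib

/-- A set of vertices `C` is a cover of the hypergraph `H` (a finite set of lines)
if every line contains a vertex of `C`. -/
def IsCover {α : Type*} (H : Finset (Finset α)) (C : Finset α) : Prop :=
  ∀ e ∈ H, ∃ v ∈ e, v ∈ C

/-- The covering number: the minimum size of a cover. -/
noncomputable def coverNumber {α : Type*} (H : Finset (Finset α)) : ℕ :=
  sInf {n | ∃ C : Finset α, IsCover H C ∧ C.card = n}

/-- A matching is a set of pairwise disjoint lines of `H`. -/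
def IsMatching {α : Type*} (H M : Finset (Finset α)) : Prop :=
  M ⊆ H ∧ ∀ e ∈ M, ∀ f ∈ M, e ≠ f → Disjoint e f

/-- The matching number: the maximum size of a matching. -/
noncomputable def matchingNumber {α : Type*} (H : Finset (Finset α)) : ℕ :=
  sSup {n | ∃ M : Finset (Finset α), IsMatching H M ∧ M.card = n}

/-- An `r`-partite hypergraph on vertex set `Fin r × V` (side `i` consists of the
vertices with first coordinate `i`): every line has exactly one vertex in each side. -/
def Rpartite {r : ℕ} {V : Type*} (H : Finset (Finset (Fin r × V))) : Prop :=
  ∀ e ∈ H, ∀ i : Fin r, ∃! v : Fin r × V, v ∈ e ∧ v.1 = i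

/-- `H` is intersecting: every two lines share at least one vertex. -/
def Intersecting {α : Type*} (H : Finset (Finset α)) : Prop :=
  ∀ e ∈ H, ∀ f ∈ H, ∃ v, v ∈ e ∧ v ∈ f

/-- `H` is linear intersecting: every two distinct lines meet in exactly one vertex. -/
def LinearIntersecting {α : Type*} (H : Finset (Finset α)) : Prop :=
  ∀ e ∈ H, ∀ f ∈ H, e ≠ f → ∃! v, v ∈ e ∧ v ∈ f

/-- The vertices of `H` (i.e. the vertices of positive degree). -/
def vertexSet {α : Type*} [DecidableEq α] (H : Finset (Finset α)) : Finset α :=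
  H.sup id

/-- The degree of a vertex: the number of lines containing it. -/
def degree {α : Type*} [DecidableEq α] (H : Finset (Finset α)) (v : α) : ℕ :=
  (H.filter (fun e => v ∈ e)).card

/-- The maximum degree of `H`. -/
def maxDegree {α : Type*} [DecidableEq α] (H : Finset (Finset α)) : ℕ :=
  (vertexSet H).sup (degree H)

/-- Side `i` of an `r`-partite hypergraph: the vertices of `H` with first coordinate `i`. -/
def side {r : ℕ} {V : Type*} [DecidableEq V] (H : Finset (Finset (Fin r × V))) (i : Fin r) :
    Finset (Fin r × V) :=
  (vertexSet H).filter (fun v => v.1 = i)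


section Auxiliary

lemma coverNumber_le_card {α : Type*} (H : Finset (Finset α)) {C : Finset α}
    (h : IsCover H C) : coverNumber H ≤ C.card :=
  Nat.sInf_le ⟨C, h, rfl⟩

variable {r : ℕ} {V : Type*} [DecidableEq V]

lemma mem_vertexSet_of {H : Finset (Finset (Fin r × V))} {e : Finset (Fin r × V)}
    {v : Fin r × V} (hv : v ∈ e) (he : e ∈ H) : v ∈ vertexSet H :=
  Finset.mem_sup.mpr ⟨e, he, hv⟩

lemma eq_of_same_side {H : Finset (Finset (Fin r × V))} (hpart : Rpartite H)
    {e : Finset (Fin r × V)} {a b : Fin r × V} (he : e ∈ H) (ha : a ∈ e) (hb : b ∈ e)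
    (h1 : a.1 = b.1) : a = b := by
  obtain ⟨v, -, hu⟩ := hpart e he b.1
  rw [hu a ⟨ha, h1⟩, hu b ⟨hb, rfl⟩]

lemma card_line {H : Finset (Finset (Fin r × V))} (hpart : Rpartite H)
    {e : Finset (Fin r × V)} (he : e ∈ H) : e.card = r := by
  have h : e.card = (Finset.univ : Finset (Fin r)).card := by
    refine Finset.card_bij (fun v _ => v.1) (fun a ha => Finset.mem_univ _) ?_ ?_
    · intro a ha b hb hab
      exact eq_of_same_side hpart he ha hb hab
    · intro i _
      obtain ⟨v, ⟨hv, hvi⟩, -⟩ := hpart e he i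
      exact ⟨v, hv, hvi⟩
  simpa using h

/-- every line `e` and vertex `v ∈ e` has a "private" line meeting `e` only at `v`. -/
lemma exists_private {H : Finset (Finset (Fin r × V))} (hr : 2 ≤ r) (hpart : Rpartite H)
    (hint : Intersecting H) (htau : coverNumber H = r)
    {e : Finset (Fin r × V)} (he : e ∈ H) {v : Fin r × V} (hv : v ∈ e) :
    ∃ f ∈ H, v ∈ f ∧ ∀ u ∈ f, u ∈ e → u = v := by
  have hnc : ¬ IsCover H (e.erase v) := by
    intro hC
    have h1 := coverNumber_le_card H hC
    rw [htau, Finset.card_erase_of_mem hv, card_line hpart he] at h1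
    omega
  rw [IsCover] at hnc
  push_neg at hnc
  obtain ⟨f, hf, hfe⟩ := hnc
  obtain ⟨u, hue, huf⟩ := hint e he f hf
  have huv : u = v := by
    by_contra hne
    exact hfe u huf (Finset.mem_erase.mpr ⟨hne, hue⟩)
  subst huv
  refine ⟨f, hf, huf, fun w hwf hwe => ?_⟩
  by_contra hne
  exact hfe w hwf (Finset.mem_erase.mpr ⟨hne, hwe⟩)

end Auxiliary

/-- If `H` is an intersecting `r`-partite hypergraph (`r ≥ 2`) with covering number
`r`, then its maximum degree is at least `4`. -/
theorem maxDegree_ge_four {r : ℕ} {V : Type*} [DecidableEq V]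
    (H : Finset (Finset (Fin r × V))) (hr : 2 ≤ r)
    (hpart : Rpartite H) (hint : Intersecting H) (htau : coverNumber H = r) :
    4 ≤ maxDegree H := by
  by_contra hcon
  push_neg at hcon
  simp only [maxDegree] at hcon
  have hD : ∀ v ∈ vertexSet H, degree H v ≤ 3 := by
    intro v hv
    have h1 := Finset.le_sup (f := degree H) hv
    omega
  have hne : H.Nonempty := by
    rcases H.eq_empty_or_nonempty with h | h
    · exfalso
      have h0 : coverNumber H ≤ 0 :=
        Nat.sInf_le ⟨∅, fun e he => absurd he (by simp [h]), rfl⟩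
      omega
    · exact h
  have hnocover : ∀ C : Finset (Fin r × V), IsCover H C → r ≤ C.card := by
    intro C hC
    have h1 := coverNumber_le_card H hC
    omega
  have hd2 : ∀ v ∈ vertexSet H, 2 ≤ degree H v := by
    intro v hv
    obtain ⟨e, he, hve⟩ := Finset.mem_sup.mp hv
    obtain ⟨f, hf, hvf, hpriv⟩ := exists_private hr hpart hint htau he hve
    have hfe : f ≠ e := by
      intro hfeq
      have hsub : e ⊆ {v} := fun u hu =>
        Finset.mem_singleton.mpr (hpriv u (by rw [hfeq]; exact hu) hu)
      have h1 := Finset.card_le_card hsub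
      rw [Finset.card_singleton, card_line hpart he] at h1
      omega
    have hsub : ({e, f} : Finset (Finset (Fin r × V))) ⊆ H.filter (fun g => v ∈ g) := by
      intro g hg
      rcases Finset.mem_insert.mp hg with h | h
      · subst h; exact Finset.mem_filter.mpr ⟨he, hve⟩
      · rw [Finset.mem_singleton] at h; subst h; exact Finset.mem_filter.mpr ⟨hf, hvf⟩
    have hcard : ({e, f} : Finset (Finset (Fin r × V))).card = 2 := by
      rw [Finset.card_insert_of_notMem (by simpa using hfe.symm), Finset.card_singleton]
    have h1 := Finset.card_le_card hsub
    rw [hcard] at h1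
    exact h1
  rcases hr.eq_or_lt with hr2 | hr3
  · -- case r = 2
    have hr2' : r = 2 := hr2.symm
    subst hr2'
    have hsing : ∀ x : Fin 2 × V, ∃ e ∈ H, x ∉ e := by
      intro x
      by_contra h
      push_neg at h
      have hc : IsCover H {x} := fun e he => ⟨x, h e he, Finset.mem_singleton_self x⟩
      have h1 := hnocover _ hc
      simp at h1
    obtain ⟨e₀, he₀⟩ := hne
    have hce₀ : e₀.card = 2 := card_line hpart he₀
    obtain ⟨x, hx⟩ := Finset.card_pos.mp (by omega : 0 < e₀.card)
    obtain ⟨e, he, hxe⟩ := hsing x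
    obtain ⟨y, hye₀, hye⟩ := hint e₀ he₀ e he
    have hxy : x ≠ y := by rintro rfl; exact hxe hye
    have he₀eq : e₀ = {x, y} := by
      apply (Finset.eq_of_subset_of_card_le ?_ ?_).symm
      · intro u hu
        rcases Finset.mem_insert.mp hu with h | h
        · subst h; exact hx
        · rw [Finset.mem_singleton] at h; subst h; exact hye₀
      · rw [hce₀, Finset.card_insert_of_notMem (by simpa using hxy), Finset.card_singleton]
    obtain ⟨f, hf, hyf⟩ := hsing y
    obtain ⟨u, hue₀, huf⟩ := hint e₀ he₀ f hf
    have hux : u = x := by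
      rw [he₀eq] at hue₀
      rcases Finset.mem_insert.mp hue₀ with h | h
      · exact h
      · rw [Finset.mem_singleton] at h; subst h; exact absurd huf hyf
    have hxf : x ∈ f := hux ▸ huf
    obtain ⟨w, hwe, hwf⟩ := hint e he f hf
    have hwy : w ≠ y := by rintro rfl; exact hyf hwf
    have hwx : w ≠ x := by rintro rfl; exact hxe hwe
    have h1 : x.1 ≠ y.1 := fun h => hxy (eq_of_same_side hpart he₀ hx hye₀ h)
    have h2 : w.1 ≠ y.1 := fun h => hwy (eq_of_same_side hpart he hwe hye h)
    have h3 : x.1 = w.1 := by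
      have a1 := x.1.isLt; have a2 := y.1.isLt; have a3 := w.1.isLt
      have b1 : x.1.val ≠ y.1.val := fun h => h1 (Fin.ext h)
      have b2 : w.1.val ≠ y.1.val := fun h => h2 (Fin.ext h)
      exact Fin.ext (by omega)
    exact hwx (eq_of_same_side hpart hf hxf hwf h3).symm
  · -- case r ≥ 3
    have hr3' : 3 ≤ r := hr3
    -- every line has at most one vertex of degree 2
    have hline1 : ∀ e ∈ H, (e.filter (fun v => degree H v = 2)).card ≤ 1 := by
      intro e he
      by_contra hcard
      push_neg at hcard
      obtain ⟨v, hv, w, hw, hvw⟩ := Finset.one_lt_card.mp hcard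
      rw [Finset.mem_filter] at hv hw
      obtain ⟨hve, hdv⟩ := hv
      obtain ⟨hwe, hdw⟩ := hw
      obtain ⟨fv, hfv, hvfv, hprivv⟩ := exists_private hr hpart hint htau he hve
      obtain ⟨fw, hfw, hwfw, hprivw⟩ := exists_private hr hpart hint htau he hwe
      have hfve : fv ≠ e := by
        rintro rfl
        exact hvw (hprivv w hwe hwe).symm
      have hfwe : fw ≠ e := by
        rintro rfl
        exact hvw (hprivw v hve hve)
      have key2 : ∀ (z : Fin r × V) (fz : Finset (Fin r × V)), z ∈ e → degree H z = 2 →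
          fz ∈ H → z ∈ fz → fz ≠ e → ∀ h ∈ H, z ∈ h → h = e ∨ h = fz := by
        intro z fz hze hdz hfz hzfz hfze h hh hzh
        have hsub : ({e, fz} : Finset (Finset (Fin r × V))) ⊆ H.filter (fun g => z ∈ g) := by
          intro g hg
          rcases Finset.mem_insert.mp hg with h' | h'
          · subst h'; exact Finset.mem_filter.mpr ⟨he, hze⟩
          · rw [Finset.mem_singleton] at h'; subst h'
            exact Finset.mem_filter.mpr ⟨hfz, hzfz⟩
        have hF : (H.filter (fun g => z ∈ g)).card = 2 := hdz
        have heq : ({e, fz} : Finset (Finset (Fin r × V))) = H.filter (fun g => z ∈ g) :=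
          Finset.eq_of_subset_of_card_le hsub (by
            rw [hF, Finset.card_insert_of_notMem (by simpa using hfze.symm),
              Finset.card_singleton])
        have hmem : h ∈ ({e, fz} : Finset (Finset (Fin r × V))) := by
          rw [heq]; exact Finset.mem_filter.mpr ⟨hh, hzh⟩
        simpa using hmem
      have hv2 := key2 v fv hve hdv hfv hvfv hfve
      have hw2 := key2 w fw hwe hdw hfw hwfw hfwe
      obtain ⟨x, hxfv, hxfw⟩ := hint fv hfv fw hfw
      have hEcard : ((e.erase v).erase w).card = r - 2 := by
        rw [Finset.card_erase_of_mem (Finset.mem_erase.mpr ⟨Ne.symm hvw, hwe⟩),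
          Finset.card_erase_of_mem hve, card_line hpart he]
        omega
      have hcov : IsCover H (insert x ((e.erase v).erase w)) := by
        intro h hh
        obtain ⟨u, hue, huh⟩ := hint e he h hh
        by_cases h1 : u = v
        · rcases hv2 h hh (h1 ▸ huh) with he' | hf'
          · obtain ⟨z, hz⟩ := Finset.card_pos.mp (by omega : 0 < ((e.erase v).erase w).card)
            refine ⟨z, ?_, Finset.mem_insert_of_mem hz⟩
            rw [he']
            exact Finset.mem_of_mem_erase (Finset.mem_of_mem_erase hz)
          · exact ⟨x, by rw [hf']; exact hxfv, Finset.mem_insert_self _ _⟩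
        · by_cases h2 : u = w
          · rcases hw2 h hh (h2 ▸ huh) with he' | hf'
            · obtain ⟨z, hz⟩ := Finset.card_pos.mp (by omega : 0 < ((e.erase v).erase w).card)
              refine ⟨z, ?_, Finset.mem_insert_of_mem hz⟩
              rw [he']
              exact Finset.mem_of_mem_erase (Finset.mem_of_mem_erase hz)
            · exact ⟨x, by rw [hf']; exact hxfw, Finset.mem_insert_self _ _⟩
          · exact ⟨u, huh, Finset.mem_insert_of_mem
              (Finset.mem_erase.mpr ⟨h2, Finset.mem_erase.mpr ⟨h1, hue⟩⟩)⟩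
      have h1 := hnocover _ hcov
      have h2 := Finset.card_insert_le x ((e.erase v).erase w)
      omega
    -- double counting
    have hdc : ∀ A : Finset (Fin r × V),
        (∑ v ∈ A, degree H v) = ∑ e ∈ H, (A.filter (fun u => u ∈ e)).card := by
      intro A
      simp only [degree, Finset.card_filter]
      exact Finset.sum_comm
    have hVe : ∀ e ∈ H, (vertexSet H).filter (fun u => u ∈ e) = e := by
      intro e he
      ext u
      simp only [Finset.mem_filter]
      exact ⟨fun h => h.2, fun h => ⟨mem_vertexSet_of h he, h⟩⟩
    have hsumdeg : (∑ v ∈ vertexSet H, degree H v) = H.card * r := by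
      rw [hdc, Finset.sum_congr rfl (fun e he => by rw [hVe e he, card_line hpart he]),
        Finset.sum_const, smul_eq_mul]
    have hD2m : 2 * ((vertexSet H).filter (fun v => degree H v = 2)).card ≤ H.card := by
      have h1 : (∑ v ∈ (vertexSet H).filter (fun v => degree H v = 2), degree H v)
          = 2 * ((vertexSet H).filter (fun v => degree H v = 2)).card := by
        rw [Finset.sum_congr rfl (fun v hv => (Finset.mem_filter.mp hv).2),
          Finset.sum_const, smul_eq_mul, mul_comm]
      have h2 : (∑ e ∈ H,
          (((vertexSet H).filter (fun v => degree H v = 2)).filter (fun u => u ∈ e)).card)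
          ≤ H.card := by
        have h3 : ∀ e ∈ H,
            (((vertexSet H).filter (fun v => degree H v = 2)).filter (fun u => u ∈ e)).card
            ≤ 1 := by
          intro e he
          refine le_trans (Finset.card_le_card ?_) (hline1 e he)
          intro u hu
          rw [Finset.mem_filter, Finset.mem_filter] at hu
          exact Finset.mem_filter.mpr ⟨hu.2, hu.1.2⟩
        calc (∑ e ∈ H,
            (((vertexSet H).filter (fun v => degree H v = 2)).filter (fun u => u ∈ e)).card)
            ≤ ∑ _e ∈ H, 1 := Finset.sum_le_sum h3
          _ = H.card := by simp
      rw [← h1, hdc]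
      exact h2
    have h3n : 3 * (vertexSet H).card ≤ H.card * r +
        ((vertexSet H).filter (fun v => degree H v = 2)).card := by
      have h1 : ∀ v ∈ vertexSet H,
          3 ≤ degree H v + (if degree H v = 2 then 1 else 0) := by
        intro v hv
        have h2 := hd2 v hv
        have h3 := hD v hv
        by_cases h : degree H v = 2 <;> simp [h] <;> omega
      calc 3 * (vertexSet H).card = ∑ _v ∈ vertexSet H, 3 := by
            rw [Finset.sum_const, smul_eq_mul, mul_comm]
        _ ≤ ∑ v ∈ vertexSet H, (degree H v + if degree H v = 2 then 1 else 0) :=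
            Finset.sum_le_sum h1
        _ = (∑ v ∈ vertexSet H, degree H v)
            + ∑ v ∈ vertexSet H, (if degree H v = 2 then 1 else 0) :=
            Finset.sum_add_distrib
        _ = H.card * r + ((vertexSet H).filter (fun v => degree H v = 2)).card := by
            rw [hsumdeg, Finset.card_filter]
    have hsides : r * r ≤ (vertexSet H).card := by
      have hfib : (vertexSet H).card
          = ∑ i : Fin r, ((vertexSet H).filter (fun v => v.1 = i)).card :=
        Finset.card_eq_sum_card_fiberwise (f := fun v : Fin r × V => v.1) (t := Finset.univ)
          (fun v _ => Finset.mem_univ _)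
      have hsidecard : ∀ i : Fin r, r ≤ ((vertexSet H).filter (fun v => v.1 = i)).card := by
        intro i
        apply hnocover
        intro e he
        obtain ⟨v, ⟨hve, hvi⟩, -⟩ := hpart e he i
        exact ⟨v, hve, Finset.mem_filter.mpr ⟨mem_vertexSet_of hve he, hvi⟩⟩
      calc r * r = ∑ _i : Fin r, r := by simp [Finset.sum_const, mul_comm]
        _ ≤ ∑ i : Fin r, ((vertexSet H).filter (fun v => v.1 = i)).card :=
            Finset.sum_le_sum (fun i _ => hsidecard i)
        _ = (vertexSet H).card := hfib.symm
    have hm2r : H.card ≤ 2 * r + 1 := by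
      obtain ⟨e₀, he₀⟩ := hne
      have hsub : H.erase e₀ ⊆ e₀.biUnion (fun v => (H.erase e₀).filter (fun h => v ∈ h)) := by
        intro h hh
        obtain ⟨u, hue, huh⟩ := hint e₀ he₀ h (Finset.mem_of_mem_erase hh)
        exact Finset.mem_biUnion.mpr ⟨u, hue, Finset.mem_filter.mpr ⟨hh, huh⟩⟩
      have hcb : (H.erase e₀).card
          ≤ ∑ v ∈ e₀, ((H.erase e₀).filter (fun h => v ∈ h)).card :=
        le_trans (Finset.card_le_card hsub) Finset.card_biUnion_le
      have hper : ∀ v ∈ e₀, ((H.erase e₀).filter (fun h => v ∈ h)).card ≤ 2 := by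
        intro v hv
        have hsub2 : (H.erase e₀).filter (fun h => v ∈ h)
            ⊆ (H.filter (fun h => v ∈ h)).erase e₀ := by
          intro h hh
          rw [Finset.mem_filter, Finset.mem_erase] at hh
          exact Finset.mem_erase.mpr ⟨hh.1.1, Finset.mem_filter.mpr ⟨hh.1.2, hh.2⟩⟩
        have h1 := Finset.card_le_card hsub2
        have h2 : ((H.filter (fun h => v ∈ h)).erase e₀).card = degree H v - 1 := by
          rw [Finset.card_erase_of_mem (Finset.mem_filter.mpr ⟨he₀, hv⟩)]
          rfl
        have h3 := hD v (mem_vertexSet_of hv he₀)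
        omega
      have hsum : (∑ v ∈ e₀, ((H.erase e₀).filter (fun h => v ∈ h)).card) ≤ 2 * r := by
        calc (∑ v ∈ e₀, ((H.erase e₀).filter (fun h => v ∈ h)).card)
            ≤ ∑ _v ∈ e₀, 2 := Finset.sum_le_sum hper
          _ = 2 * r := by rw [Finset.sum_const, smul_eq_mul, card_line hpart he₀, mul_comm]
      have h5 : (H.erase e₀).card = H.card - 1 := Finset.card_erase_of_mem he₀
      have h6 : 1 ≤ H.card := Finset.card_pos.mpr ⟨e₀, he₀⟩
      omega
    -- final contradiction
    have key : 6 * (r * r) ≤ (2 * r + 1) * (2 * r + 1) := by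
      calc 6 * (r * r) ≤ 6 * (vertexSet H).card := Nat.mul_le_mul (le_refl 6) hsides
        _ = 2 * (3 * (vertexSet H).card) := by ring
        _ ≤ 2 * (H.card * r + ((vertexSet H).filter (fun v => degree H v = 2)).card) :=
            Nat.mul_le_mul (le_refl 2) h3n
        _ = 2 * (H.card * r)
            + 2 * ((vertexSet H).filter (fun v => degree H v = 2)).card := by ring
        _ ≤ 2 * (H.card * r) + H.card := by omega
        _ = H.card * (2 * r + 1) := by ring
        _ ≤ (2 * r + 1) * (2 * r + 1) := Nat.mul_le_mul hm2r (le_refl _)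
    have hrr : 3 * r ≤ r * r := Nat.mul_le_mul hr3' (le_refl r)
    nlinarith [key, hrr, hr3']
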